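/- arXiv:math/0512099 — 2 statements merged into one kernel-verified Lean document; each statement's English description precedes it below -/
import Mathlib

section
/- Let p be an odd prime with p ≡ 3 (mod 4). In the group ring ℤ[ℤ/p], the element p·(Σ_{k=0}^{p-1} t^{2k²})² is not equal to p·(Σ_{k=0}^{p-1} t^{2k²})·(Σ_{k=0}^{p-1} t^{−2k²}), where t denotes a generator of ℤ/p written multiplicatively. -/
/-- For an odd prime `p ≡ 3 (mod 4)`, in the group ring `ℤ[ℤ/p]`
(realized as `AddMonoidAlgebra ℤ (ZMod p)`, where `t^m` is `single m 1`),
`p·(Σ_{k<p} t^{2k²})² ≠ p·(Σ_{k<p} t^{2k²})·(Σ_{k<p} t^{−2k²})`. -/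
theorem stmt4 (p : ℕ) (hp : p.Prime) (hodd : Odd p) (h4 : p % 4 = 3)
    (u v : AddMonoidAlgebra ℤ (ZMod p))
    (hu : u = ∑ k ∈ Finset.range p,
      AddMonoidAlgebra.single ((2 * k ^ 2 : ℕ) : ZMod p) (1 : ℤ))
    (hv : v = ∑ k ∈ Finset.range p,
      AddMonoidAlgebra.single (-((2 * k ^ 2 : ℕ) : ZMod p)) (1 : ℤ)) :
    (p : ℤ) • (u * u) ≠ (p : ℤ) • (u * v) := by
  classical
  haveI : Fact p.Prime := ⟨hp⟩
  have hp2 : p ≠ 2 := by rintro rfl; simp at h4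
  have hp3 : 3 ≤ p := by
    rcases hp.two_le.lt_or_eq with h | h
    · omega
    · omega
  have h2ne : (2 : ZMod p) ≠ 0 := by
    intro h
    rw [show ((2:ZMod p)) = ((2:ℕ):ZMod p) by push_cast; ring,
      ZMod.natCast_eq_zero_iff] at h
    exact hp2 ((Nat.prime_dvd_prime_iff_eq hp Nat.prime_two).mp h)
  have hnsq : ¬ IsSquare (-1 : ZMod p) := by
    rw [ZMod.exists_sq_eq_neg_one_iff]; simp [h4]
  -- key counting lemma for u*u
  have key : ∀ j k : ℕ, j < p → k < p →
      ((((2*j^2 : ℕ) : ZMod p) + ((2*k^2 : ℕ) : ZMod p) = 0) ↔ (j = 0 ∧ k = 0)) := by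
    intro j k hj hk
    constructor
    · intro h
      push_cast at h
      have hsum : (j:ZMod p)^2 + (k:ZMod p)^2 = 0 := by
        have : (2:ZMod p) * ((j:ZMod p)^2 + (k:ZMod p)^2) = 2 * 0 := by ring_nf; linear_combination h
        exact mul_left_cancel₀ h2ne this
      have hj0 : (j : ZMod p) = 0 := by
        by_contra hj0
        apply hnsq
        refine ⟨(k:ZMod p) * (j:ZMod p)⁻¹, ?_⟩
        field_simp
        linear_combination -hsum
      have hk0 : (k : ZMod p) = 0 := by
        have : (k:ZMod p)^2 = 0 := by rw [hj0] at hsum; simpa using hsum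
        exact pow_eq_zero_iff (by norm_num) |>.mp this
      rw [ZMod.natCast_eq_zero_iff] at hj0 hk0
      exact ⟨Nat.eq_zero_of_dvd_of_lt hj0 hj, Nat.eq_zero_of_dvd_of_lt hk0 hk⟩
    · rintro ⟨rfl, rfl⟩; simp
  -- expand products
  have huu : u * u = ∑ j ∈ Finset.range p, ∑ k ∈ Finset.range p,
      AddMonoidAlgebra.single (((2*j^2:ℕ):ZMod p) + ((2*k^2:ℕ):ZMod p)) (1:ℤ) := by
    rw [hu, Finset.sum_mul_sum]
    simp [AddMonoidAlgebra.single_mul_single]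
  have huv : u * v = ∑ j ∈ Finset.range p, ∑ k ∈ Finset.range p,
      AddMonoidAlgebra.single (((2*j^2:ℕ):ZMod p) + -((2*k^2:ℕ):ZMod p)) (1:ℤ) := by
    rw [hu, hv, Finset.sum_mul_sum]
    simp [AddMonoidAlgebra.single_mul_single]
  have e1 : (u * u).coeff 0 = ∑ j ∈ Finset.range p, ∑ k ∈ Finset.range p,
      (if ((2*j^2:ℕ):ZMod p) + ((2*k^2:ℕ):ZMod p) = 0 then (1:ℤ) else 0) := by
    rw [huu]
    simp only [AddMonoidAlgebra.coeff_sum, AddMonoidAlgebra.coeff_single]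
    refine (Finsupp.finset_sum_apply _ _ _).trans (Finset.sum_congr rfl fun j _ => ?_)
    refine (Finsupp.finset_sum_apply _ _ _).trans (Finset.sum_congr rfl fun k _ => ?_)
    exact Finsupp.single_apply
  have e2' : (u * v).coeff 0 = ∑ j ∈ Finset.range p, ∑ k ∈ Finset.range p,
      (if ((2*j^2:ℕ):ZMod p) + -((2*k^2:ℕ):ZMod p) = 0 then (1:ℤ) else 0) := by
    rw [huv]
    simp only [AddMonoidAlgebra.coeff_sum, AddMonoidAlgebra.coeff_single]
    refine (Finsupp.finset_sum_apply _ _ _).trans (Finset.sum_congr rfl fun j _ => ?_)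
    refine (Finsupp.finset_sum_apply _ _ _).trans (Finset.sum_congr rfl fun k _ => ?_)
    exact Finsupp.single_apply
  have huu0 : (u * u).coeff 0 = 1 := by
    rw [e1]
    rw [Finset.sum_congr rfl (fun j hj => Finset.sum_congr rfl (fun k hk => by
      rw [if_congr (key j k (Finset.mem_range.mp hj) (Finset.mem_range.mp hk)) rfl rfl]))]
    simp [Finset.sum_ite_eq', hp.pos, ite_and]
  have huv0 : (2:ℤ) ≤ (u * v).coeff 0 := by
    rw [e2', ← Finset.sum_product']
    have hsub : ({((0:ℕ),(0:ℕ)), (1, p-1)} : Finset (ℕ × ℕ)) ⊆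
        Finset.range p ×ˢ Finset.range p := by
      intro x hx
      simp only [Finset.mem_insert, Finset.mem_singleton] at hx
      rcases hx with rfl | rfl <;> simp [Finset.mem_product] <;> omega
    have hne : ((0:ℕ),(0:ℕ)) ≠ (1, p-1) := by
      intro h; have := congrArg Prod.snd h; simp at this; omega
    have hcast : ((p - 1 : ℕ) : ZMod p) = -1 := by
      rw [Nat.cast_sub hp.one_le]; simp
    have e2 : ((2*(p-1)^2 : ℕ) : ZMod p) = 2 := by push_cast [hcast]; ring
    have h1c : (((2*0^2:ℕ):ZMod p) + ((2*0^2:ℕ):ZMod p) * (-1) = 0) := by norm_num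
    calc (2:ℤ) = ∑ x ∈ ({((0:ℕ),(0:ℕ)), (1, p-1)} : Finset (ℕ × ℕ)),
        (if (((2*x.1^2:ℕ):ZMod p) + -((2*x.2^2:ℕ):ZMod p)) = 0 then (1:ℤ) else 0) := by
          rw [Finset.sum_pair hne]
          rw [if_pos (by norm_num), if_pos (by rw [e2]; norm_num)]
          norm_num
      _ ≤ _ := Finset.sum_le_sum_of_subset_of_nonneg hsub
          (fun i _ _ => by split <;> norm_num)
  intro heq
  have h0 := congrArg (fun f : AddMonoidAlgebra ℤ (ZMod p) => f.coeff 0) heq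
  have a1 : ((p:ℤ) • (u*u)).coeff 0 = (p:ℤ) * (u*u).coeff 0 := AddMonoidAlgebra.coeff_smul_apply _ _ _
  have a2 : ((p:ℤ) • (u*v)).coeff 0 = (p:ℤ) * (u*v).coeff 0 := AddMonoidAlgebra.coeff_smul_apply _ _ _
  beta_reduce at h0
  rw [a1, a2, huu0, mul_one] at h0
  have hppos : (0:ℤ) < p := by exact_mod_cast hp.pos
  nlinarith [huv0]
end

section
/- Let X be a quandle and let C_n^D(X) ⊆ C_n^R(X) be the subgroup generated by n-tuples (x_1,...,x_n) with x_i = x_{i+1} for some i (for n > 1; and 0 for n ≤ 1). Then the rack boundary map satisfies ∂_n(C_n^D(X)) ⊆ C_{n-1}^D(X), so the degenerate chains form a subcomplex. -/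
/-- A quandle: a set with a binary operation `*` satisfying
(Q1) idempotence, (Q2) unique solvability `∃! c, c * b = a`, and
(Q3) right self-distributivity. -/
structure Quandle' (X : Type) where
  op : X → X → X
  idem : ∀ a, op a a = a
  rightUnique : ∀ a b, ∃! c, op c b = a
  distrib : ∀ a b c, op (op a b) c = op (op a c) (op b c)

/-- The rack chain group `C_n^R(X)`: the free abelian group on `n`-tuples of
elements of `X`, realized as finitely supported `ℤ`-valued functions. -/
abbrev rackChain (X : Type) (n : ℕ) : Type := (Fin n → X) →₀ ℤ

/-- The rack boundary map `∂ : C_{n+1}^R(X) → C_n^R(X)`, defined on a generator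
`(x_1, ..., x_{n+1})` (here the tuple `x : Fin (n+1) → X`, with the paper's index
`i ∈ {1, ..., n+1}` corresponding to `i : Fin (n+1)` via `i.val + 1`) by
`(−1)^n Σ_i (−1)^{i+1} [(x_1,...,x̂_i,...,x_{n+1}) −
 (x_1*x_i,...,x_{i-1}*x_i,x_{i+1},...,x_{n+1})]`.
(For `n = 0`, i.e. `∂_1`, the two terms coincide and the map is `0`.) -/
noncomputable def rackBd {X : Type} (q : Quandle' X) (n : ℕ) :
    rackChain X (n + 1) →+ rackChain X n :=
  Finsupp.liftAddHom fun x : Fin (n + 1) → X =>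
    zmultiplesHom (rackChain X n)
      (∑ i : Fin (n + 1), ((-1 : ℤ) ^ (n + (i : ℕ) + 1)) •
        (Finsupp.single (fun j : Fin n => x (i.succAbove j)) (1 : ℤ)
          - Finsupp.single
              (fun j : Fin n =>
                if (i.succAbove j : Fin (n + 1)) < i then
                  q.op (x (i.succAbove j)) (x i)
                else x (i.succAbove j)) (1 : ℤ)))


/-- A tuple is degenerate if two consecutive entries are equal. -/
def IsDegTuple {X : Type} {n : ℕ} (x : Fin n → X) : Prop :=
  ∃ i j : Fin n, (i : ℕ) + 1 = (j : ℕ) ∧ x i = x j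

/-- The degenerate subgroup `C_n^D(X) ⊆ C_n^R(X)`, generated by tuples with two
equal consecutive entries. -/
noncomputable def degSubgroup (X : Type) (n : ℕ) : AddSubgroup (rackChain X n) :=
  AddSubgroup.closure {c | ∃ x : Fin n → X, IsDegTuple x ∧ c = Finsupp.single x 1}

lemma succAbove_val {n : ℕ} (i : Fin (n+1)) (m : Fin n) :
    ((i.succAbove m : Fin (n+1)) : ℕ) = if (m : ℕ) < (i : ℕ) then (m : ℕ) else (m : ℕ) + 1 := by
  simp [Fin.succAbove]; split <;> split <;> simp_all [Fin.lt_def]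

lemma mem_deg {X : Type} {n : ℕ} {x : Fin n → X} (h : IsDegTuple x) :
    (Finsupp.single x 1 : rackChain X n) ∈ degSubgroup X n :=
  AddSubgroup.subset_closure ⟨x, h, rfl⟩

lemma exists_ab {n : ℕ} {i k j : Fin (n+1)} (hkj : (k : ℕ) + 1 = (j : ℕ))
    (hik : i ≠ k) (hij : i ≠ j) :
    ∃ a b : Fin n, (a : ℕ) + 1 = (b : ℕ) ∧ i.succAbove a = k ∧ i.succAbove b = j := by
  have hk : (k : ℕ) < n := by have := j.isLt; omega
  have hik' : (i : ℕ) ≠ (k : ℕ) := fun h => hik (Fin.ext h)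
  have hij' : (i : ℕ) ≠ (j : ℕ) := fun h => hij (Fin.ext h)
  rcases Nat.lt_or_ge (i : ℕ) (k : ℕ) with h | h
  · refine ⟨⟨(k : ℕ) - 1, by omega⟩, ⟨(k : ℕ), hk⟩, by simp only [Fin.val_mk]; omega, ?_, ?_⟩
    · apply Fin.ext; rw [succAbove_val]; simp only [Fin.val_mk]; split <;> omega
    · apply Fin.ext; rw [succAbove_val]; simp only [Fin.val_mk]; split <;> omega
  · have h2 : (k : ℕ) + 1 < (i : ℕ) := by omega
    refine ⟨⟨(k : ℕ), hk⟩, ⟨(k : ℕ) + 1, by omega⟩, rfl, ?_, ?_⟩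
    · apply Fin.ext; rw [succAbove_val]; simp only [Fin.val_mk]; split <;> omega
    · apply Fin.ext; rw [succAbove_val]; simp only [Fin.val_mk]; split <;> omega

lemma rackBd_single_mem {X : Type} (q : Quandle' X) (n : ℕ) (x : Fin (n+1) → X)
    (hx : IsDegTuple x) :
    rackBd q n (Finsupp.single x 1) ∈ degSubgroup X n := by
  classical
  obtain ⟨k, j, hkj, hxkj⟩ := hx
  rw [rackBd, Finsupp.liftAddHom_apply_single]
  simp only [zmultiplesHom_apply, one_smul]
  have hjk : k ≠ j := by intro h; rw [h] at hkj; omega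
  rw [← Finset.sum_erase_add Finset.univ _ (Finset.mem_univ j),
      ← Finset.sum_erase_add _ _ (Finset.mem_erase.mpr ⟨hjk, Finset.mem_univ k⟩),
      add_assoc]
  apply AddSubgroup.add_mem
  · apply AddSubgroup.sum_mem
    intro i hi
    rw [Finset.mem_erase, Finset.mem_erase] at hi
    obtain ⟨hik, hij, -⟩ := hi
    obtain ⟨a, b, hab, ha, hb⟩ := exists_ab hkj hik hij
    have hik' : (i : ℕ) ≠ (k : ℕ) := fun h => hik (Fin.ext h)
    have hij' : (i : ℕ) ≠ (j : ℕ) := fun h => hij (Fin.ext h)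
    apply AddSubgroup.zsmul_mem
    apply AddSubgroup.sub_mem
    · refine mem_deg ⟨a, b, hab, ?_⟩
      show x (i.succAbove a) = x (i.succAbove b)
      rw [ha, hb]; exact hxkj
    · refine mem_deg ⟨a, b, hab, ?_⟩
      show (if i.succAbove a < i then q.op (x (i.succAbove a)) (x i) else x (i.succAbove a))
          = (if i.succAbove b < i then q.op (x (i.succAbove b)) (x i) else x (i.succAbove b))
      rw [ha, hb, hxkj]
      exact if_congr (by rw [Fin.lt_def, Fin.lt_def]; omega) rfl rfl
  · have hface : (fun m : Fin n => x (k.succAbove m)) = (fun m => x (j.succAbove m)) := by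
      funext m
      rcases lt_trichotomy (m : ℕ) (k : ℕ) with h | h | h
      · congr 1; apply Fin.ext
        rw [succAbove_val, succAbove_val]; split <;> split <;> omega
      · have h1 : k.succAbove m = j := by
          apply Fin.ext; rw [succAbove_val]; split <;> omega
        have h2 : j.succAbove m = k := by
          apply Fin.ext; rw [succAbove_val]; split <;> omega
        rw [h1, h2, hxkj]
      · congr 1; apply Fin.ext
        rw [succAbove_val, succAbove_val]; split <;> split <;> omega
    have htface :
        (fun m : Fin n => if k.succAbove m < k then q.op (x (k.succAbove m)) (x k)
            else x (k.succAbove m))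
          = (fun m => if j.succAbove m < j then q.op (x (j.succAbove m)) (x j)
            else x (j.succAbove m)) := by
      funext m
      rcases lt_trichotomy (m : ℕ) (k : ℕ) with h | h | h
      · have h1 : k.succAbove m = j.succAbove m := by
          apply Fin.ext; rw [succAbove_val, succAbove_val]; split <;> split <;> omega
        have c1 : k.succAbove m < k := by
          rw [Fin.lt_def, succAbove_val]; split <;> omega
        have c2 : j.succAbove m < j := by
          rw [Fin.lt_def, succAbove_val]; split <;> omega
        rw [if_pos c1, if_pos c2, h1, hxkj]
      · have h1 : k.succAbove m = j := by
          apply Fin.ext; rw [succAbove_val]; split <;> omega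
        have h2 : j.succAbove m = k := by
          apply Fin.ext; rw [succAbove_val]; split <;> omega
        have c1 : ¬ k.succAbove m < k := by
          rw [Fin.lt_def, succAbove_val]; split <;> omega
        have c2 : j.succAbove m < j := by
          rw [Fin.lt_def, succAbove_val]; split <;> omega
        rw [if_neg c1, if_pos c2, h1, h2, hxkj, q.idem]
      · have h1 : k.succAbove m = j.succAbove m := by
          apply Fin.ext; rw [succAbove_val, succAbove_val]; split <;> split <;> omega
        have c1 : ¬ k.succAbove m < k := by
          rw [Fin.lt_def, succAbove_val]; split <;> omega
        have c2 : ¬ j.succAbove m < j := by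
          rw [Fin.lt_def, succAbove_val]; split <;> omega
        rw [if_neg c1, if_neg c2, h1]
    have hsign : ((-1 : ℤ) ^ (n + (j : ℕ) + 1)) = -((-1 : ℤ) ^ (n + (k : ℕ) + 1)) := by
      rw [← hkj, show n + ((k : ℕ) + 1) + 1 = (n + (k : ℕ) + 1) + 1 from by omega, pow_succ]
      ring
    rw [hface, htface, hsign, neg_smul, add_neg_cancel]
    exact AddSubgroup.zero_mem _

/-- The rack boundary maps the degenerate chains into the degenerate chains:
`∂_n(C_n^D(X)) ⊆ C_{n-1}^D(X)`, so the degenerate chains form a subcomplex. -/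
theorem stmt10 {X : Type} (q : Quandle' X) (n : ℕ) :
    ∀ c ∈ degSubgroup X (n + 1), rackBd q n c ∈ degSubgroup X n := by
  intro c hc
  induction hc using AddSubgroup.closure_induction with
  | mem c hc =>
      obtain ⟨x, hx, rfl⟩ := hc
      exact rackBd_single_mem q n x hx
  | zero => simp only [map_zero]; exact AddSubgroup.zero_mem _
  | add a b _ _ ha hb => rw [map_add]; exact AddSubgroup.add_mem _ ha hb
  | neg a _ ha => rw [map_neg]; exact AddSubgroup.neg_mem _ ha
end
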